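/- Let A and B be uniform algebras on compact Hausdorff spaces X and Y, let a, b ∈ ℂ, and set p(z,w) = zw + az + bw + ab. If T : A → B is surjective and Ran_π(p(Tf, Tg)) = Ran_π(p(f,g)) for all f, g ∈ A, then the map S : A → B defined by Sf = T(f − b·1) + b·1 is surjective and satisfies Ran_π(Sf · (Sg + c·1)) = Ran_π(f · (g + c·1)) for all f, g ∈ A, where c = a − b. -/

import Mathlib

set_option maxHeartbeats 2000000
set_option synthInstance.maxHeartbeats 1000000


/-- The peripheral range of a continuous function on a compact space. -/
def Ranπ {X : Type*} [TopologicalSpace X] [CompactSpace X] (f : C(X, ℂ)) : Set ℂ :=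
  {z | z ∈ Set.range f ∧ ‖z‖ = ‖f‖}


private lemma aux {R : Type*} [CommRing R] [Algebra ℂ R] (a b : ℂ) (u v : R) :
    (u + b • 1) * (v + a • 1) = u * v + a • u + b • v + (a * b) • 1 := by
  simp only [Algebra.smul_def, map_mul]
  ring

theorem stmt9 {X Y : Type*} [TopologicalSpace X] [CompactSpace X] [T2Space X]
    [TopologicalSpace Y] [CompactSpace Y] [T2Space Y]
    (A : Subalgebra ℂ C(X, ℂ)) (hA : IsClosed (A : Set C(X, ℂ)))
    (hAsep : ∀ x y : X, x ≠ y → ∃ f ∈ A, f x ≠ f y)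
    (B : Subalgebra ℂ C(Y, ℂ)) (hB : IsClosed (B : Set C(Y, ℂ)))
    (hBsep : ∀ x y : Y, x ≠ y → ∃ f ∈ B, f x ≠ f y)
    (a b : ℂ) (T : A → B) (hTsurj : Function.Surjective T)
    (hT : ∀ f g : A,
      Ranπ ((T f * T g + a • T f + b • T g + (a * b) • 1 : B) : C(Y, ℂ)) =
        Ranπ ((f * g + a • f + b • g + (a * b) • 1 : A) : C(X, ℂ)))
    (S : A → B) (hS : ∀ f : A, S f = T (f - b • 1) + b • 1) :
    Function.Surjective S ∧
      ∀ f g : A,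
        Ranπ ((S f * (S g + (a - b) • 1) : B) : C(Y, ℂ)) =
          Ranπ ((f * (g + (a - b) • 1) : A) : C(X, ℂ)) := by
  constructor
  · intro h
    obtain ⟨f, hf⟩ := hTsurj (h - b • 1)
    exact ⟨f + b • 1, by rw [hS, add_sub_cancel_right, hf, sub_add_cancel]⟩
  · intro f g
    have h1 : (S f * (S g + (a - b) • 1) : B) =
        T (f - b • 1) * T (g - b • 1) + a • T (f - b • 1) + b • T (g - b • 1) + (a * b) • 1 := by
      rw [hS, hS, add_assoc, ← add_smul]
      have e : b + (a - b) = a := by ring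
      rw [e, aux]
    have h2 : (f * (g + (a - b) • 1) : A) =
        (f - b • 1) * (g - b • 1) + a • (f - b • 1) + b • (g - b • 1) + (a * b) • 1 := by
      have := aux a b (f - b • 1) (g - b • 1)
      rw [sub_add_cancel] at this
      rw [← this]
      congr 1
      rw [sub_smul]
      abel
    rw [h1, h2, hT]
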